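/- For the complete bipartite graph K_{ℓ,ℓ+1} with ℓ ≥ 2, λ_3(K_{ℓ,ℓ+1}) = ℓ; that is, for every 3-element subset S of vertices of K_{ℓ,ℓ+1} there exist ℓ pairwise edge-disjoint trees each containing S, and some 3-subset admits no more than ℓ. -/

import Mathlib

open SimpleGraph

/-- An `S`-Steiner tree in `G`: a subgraph of `G` that is a tree whose
vertex set contains `S`. -/
def SimpleGraph.IsSteinerTree {V : Type*} (G : SimpleGraph V) (S : Set V)
    (T : G.Subgraph) : Prop :=
  S ⊆ T.verts ∧ T.coe.IsTree

/-- The generalized local edge-connectivity `λ(S)`: the maximum number of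
pairwise edge-disjoint `S`-Steiner trees in `G`. -/
noncomputable def SimpleGraph.steinerLambda {V : Type*} (G : SimpleGraph V)
    (S : Set V) : ℕ :=
  sSup {n | ∃ T : Fin n → G.Subgraph, (∀ i, G.IsSteinerTree S (T i)) ∧
    ∀ i j, i ≠ j → Disjoint (T i).edgeSet (T j).edgeSet}

/-- The generalized `k`-edge-connectivity `λ_k(G)`:
the minimum of `λ(S)` over all `k`-element vertex subsets `S`. -/
noncomputable def SimpleGraph.genEdgeConn {V : Type*} (G : SimpleGraph V)
    (k : ℕ) : ℕ :=
  sInf {m | ∃ S : Set V, S.ncard = k ∧ G.steinerLambda S = m}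

open SimpleGraph Walk

section Aux


variable {W : Type*}

/-- If every edge of `G` is incident to `c`, except possibly the single edge `s(x,p)`,
then a trail avoiding `c` has length at most 1. -/
lemma walk_short {G : SimpleGraph W} {c x p : W}
    (h : ∀ a b : W, G.Adj a b → a = c ∨ b = c ∨ (a = x ∧ b = p) ∨ (a = p ∧ b = x)) :
    ∀ {u v : W} (q : G.Walk u v), q.IsTrail → c ∉ q.support → q.length ≤ 1 := by
  intro u v q
  cases q with
  | nil => intro _ _; simp
  | @cons _ b _ h₁ q' =>
    intro ht hc
    cases q' with
    | nil => simp
    | @cons _ z _ h₂ q'' =>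
      exfalso
      have huc : u ≠ c := by rintro rfl; exact hc (Walk.start_mem_support _)
      have hbc : b ≠ c := by rintro rfl; exact hc (by simp)
      have hzc : z ≠ c := by rintro rfl; exact hc (by simp)
      have e1 : s(u, b) = s(x, p) := by
        rcases h u b h₁ with rfl | rfl | ⟨rfl, rfl⟩ | ⟨rfl, rfl⟩
        · exact absurd rfl huc
        · exact absurd rfl hbc
        · rfl
        · exact Sym2.eq_swap
      have e2 : s(b, z) = s(x, p) := by
        rcases h b z h₂ with rfl | rfl | ⟨rfl, rfl⟩ | ⟨rfl, rfl⟩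
        · exact absurd rfl hbc
        · exact absurd rfl hzc
        · rfl
        · exact Sym2.eq_swap
      have := ht.edges_nodup
      simp only [Walk.edges_cons, List.nodup_cons, List.mem_cons] at this
      exact this.1 (Or.inl (e1.trans e2.symm))

lemma acyclic_of_edges (G : SimpleGraph W) (c x p : W)
    (h : ∀ a b : W, G.Adj a b → a = c ∨ b = c ∨ (a = x ∧ b = p) ∨ (a = p ∧ b = x))
    (hcp : ¬ G.Adj c p) : G.IsAcyclic := by
  intro u C hC
  classical
  by_cases hc : c ∈ C.support
  · set D := C.rotate c hc with hD
    have hD' : D.IsCycle := hC.rotate hc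
    clear_value D
    clear hD hC
    cases D with
    | nil => exact hD'.ne_nil rfl
    | @cons _ v₁ _ h₁ q =>
      have hq_nodup : q.support.Nodup := by
        have := hD'.2
        simpa using this
      have hq_trail : q.IsTrail := hD'.isTrail.of_cons
      have hv₁c : v₁ ≠ c := fun hh => by subst hh; exact G.irrefl h₁
      have hlen : 3 ≤ q.length + 1 := by simpa using hD'.three_le_length
      -- look at q.reverse : Walk c v₁
      have hqr_trail : q.reverse.IsTrail := hq_trail.reverse
      have hqr_nodup : q.reverse.support.Nodup := by
        simpa [Walk.support_reverse] using hq_nodup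
      have hqlen : q.reverse.length = q.length := q.length_reverse
      set qr := q.reverse with hqr
      clear_value qr
      cases qr with
      | nil => exact hv₁c rfl
      | @cons _ v₂ _ h₂ r =>
        have hcr : c ∉ r.support := by
          simp only [Walk.support_cons, List.nodup_cons] at hqr_nodup
          exact hqr_nodup.1
        have hr_trail : r.IsTrail := hqr_trail.of_cons
        have hrlen : r.length ≤ 1 := walk_short h r hr_trail hcr
        have hrlen1 : r.length = 1 := by
          simp only [Walk.length_cons] at hqlen
          omega
        cases r with
        | nil => simp at hrlen1
        | @cons _ z _ h₃ r' =>
          cases r' with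
          | nil =>
            have hv₂c : v₂ ≠ c := by
              intro hh; subst hh; exact hcr (Walk.start_mem_support _)
            rcases h v₂ v₁ h₃ with rfl | rfl | ⟨rfl, rfl⟩ | ⟨rfl, rfl⟩
            · exact hv₂c rfl
            · exact hv₁c rfl
            · exact hcp h₁
            · exact hcp h₂
          | cons h₄ r'' => simp [Walk.length_cons] at hrlen1
  · have := walk_short h C hC.isTrail hc
    have := hC.three_le_length
    omega


variable {W : Type*}

/-- Star subgraph: center `c`, leaves `s`. -/
def starSub (G : SimpleGraph W) (c : W) (s : Set W)
    (h : ∀ v ∈ s, G.Adj c v) : G.Subgraph where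
  verts := insert c s
  Adj a b := (a = c ∧ b ∈ s) ∨ (b = c ∧ a ∈ s)
  adj_sub := by rintro a b (⟨rfl, hb⟩ | ⟨rfl, ha⟩); exacts [h _ hb, (h _ ha).symm]
  edge_vert := by rintro a b (⟨rfl, hb⟩ | ⟨rfl, ha⟩) <;> simp [*]
  symm := ⟨fun a b hab => by tauto⟩

/-- Spider: star at `c` with leaves `s` plus a pendant edge from `x ∈ s` to `p`. -/
def spiderSub (G : SimpleGraph W) (c : W) (s : Set W) (x p : W)
    (h : ∀ v ∈ s, G.Adj c v) (hx : x ∈ s) (hxp : G.Adj x p) : G.Subgraph where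
  verts := insert p (insert c s)
  Adj a b := (a = c ∧ b ∈ s) ∨ (b = c ∧ a ∈ s) ∨ (a = x ∧ b = p) ∨ (a = p ∧ b = x)
  adj_sub := by
    rintro a b (⟨rfl, hb⟩ | ⟨rfl, ha⟩ | ⟨rfl, rfl⟩ | ⟨rfl, rfl⟩)
    exacts [h _ hb, (h _ ha).symm, hxp, hxp.symm]
  edge_vert := by
    rintro a b (⟨rfl, hb⟩ | ⟨rfl, ha⟩ | ⟨rfl, rfl⟩ | ⟨rfl, rfl⟩) <;> simp [*]
  symm := ⟨fun a b hab => by tauto⟩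

lemma starSub_verts (G : SimpleGraph W) (c : W) (s : Set W) (h : ∀ v ∈ s, G.Adj c v) :
    (starSub G c s h).verts = insert c s := rfl

lemma starSub_edgeSet (G : SimpleGraph W) (c : W) (s : Set W) (h : ∀ v ∈ s, G.Adj c v)
    {e : Sym2 W} : e ∈ (starSub G c s h).edgeSet ↔ ∃ v ∈ s, e = s(c, v) := by
  induction e with
  | _ a b =>
    rw [Subgraph.mem_edgeSet]
    constructor
    · rintro (⟨rfl, hb⟩ | ⟨rfl, ha⟩)
      · exact ⟨b, hb, rfl⟩
      · exact ⟨a, ha, Sym2.eq_swap⟩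
    · rintro ⟨v, hv, he⟩
      rw [Sym2.eq_iff] at he
      rcases he with ⟨rfl, rfl⟩ | ⟨rfl, rfl⟩
      · exact Or.inl ⟨rfl, hv⟩
      · exact Or.inr ⟨rfl, hv⟩

lemma spiderSub_edgeSet (G : SimpleGraph W) (c : W) (s : Set W) (x p : W)
    (h : ∀ v ∈ s, G.Adj c v) (hx : x ∈ s) (hxp : G.Adj x p) {e : Sym2 W} :
    e ∈ (spiderSub G c s x p h hx hxp).edgeSet ↔ (∃ v ∈ s, e = s(c, v)) ∨ e = s(x, p) := by
  induction e with
  | _ a b =>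
    rw [Subgraph.mem_edgeSet]
    constructor
    · rintro (⟨rfl, hb⟩ | ⟨rfl, ha⟩ | ⟨rfl, rfl⟩ | ⟨rfl, rfl⟩)
      · exact Or.inl ⟨b, hb, rfl⟩
      · exact Or.inl ⟨a, ha, Sym2.eq_swap⟩
      · exact Or.inr rfl
      · exact Or.inr Sym2.eq_swap
    · rintro (⟨v, hv, he⟩ | he) <;> rw [Sym2.eq_iff] at he <;>
        rcases he with ⟨rfl, rfl⟩ | ⟨rfl, rfl⟩
      · exact Or.inl ⟨rfl, hv⟩
      · exact Or.inr (Or.inl ⟨rfl, hv⟩)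
      · exact Or.inr (Or.inr (Or.inl ⟨rfl, rfl⟩))
      · exact Or.inr (Or.inr (Or.inr ⟨rfl, rfl⟩))

lemma starSub_isTree (G : SimpleGraph W) (c : W) (s : Set W) (h : ∀ v ∈ s, G.Adj c v) :
    (starSub G c s h).coe.IsTree := by
  have hcv : c ∈ (starSub G c s h).verts := Set.mem_insert _ _
  constructor
  · rw [connected_iff]
    refine ⟨?_, ⟨⟨c, hcv⟩⟩⟩
    have key : ∀ a : (starSub G c s h).verts,
        (starSub G c s h).coe.Reachable a ⟨c, hcv⟩ := by
      rintro ⟨a, ha⟩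
      rcases (ha : a ∈ insert c s) with rfl | ha
      · exact Reachable.refl _
      · exact Adj.reachable (by exact Or.inr ⟨rfl, ha⟩)
    intro a b
    exact (key a).trans (key b).symm
  · apply acyclic_of_edges (starSub G c s h).coe ⟨c, hcv⟩ ⟨c, hcv⟩ ⟨c, hcv⟩
    · rintro ⟨a, ha⟩ ⟨b, hb⟩ hab
      rcases (hab : _ ∨ _) with ⟨h1, -⟩ | ⟨h1, -⟩
      · exact Or.inl (Subtype.ext h1)
      · exact Or.inr (Or.inl (Subtype.ext h1))
    · exact fun hadj => (starSub G c s h).coe.irrefl hadj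

lemma spiderSub_isTree (G : SimpleGraph W) (c : W) (s : Set W) (x p : W)
    (h : ∀ v ∈ s, G.Adj c v) (hx : x ∈ s) (hxp : G.Adj x p)
    (hpc : p ≠ c) (hps : p ∉ s) :
    (spiderSub G c s x p h hx hxp).coe.IsTree := by
  have hcv : c ∈ (spiderSub G c s x p h hx hxp).verts :=
    Set.mem_insert_of_mem _ (Set.mem_insert _ _)
  have hxv : x ∈ (spiderSub G c s x p h hx hxp).verts :=
    Set.mem_insert_of_mem _ (Set.mem_insert_of_mem _ hx)
  have hpv : p ∈ (spiderSub G c s x p h hx hxp).verts := Set.mem_insert _ _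
  have hxc : x ≠ c := fun hh => G.irrefl (hh ▸ h x hx)
  constructor
  · rw [connected_iff]
    refine ⟨?_, ⟨⟨c, hcv⟩⟩⟩
    have hadjxc : (spiderSub G c s x p h hx hxp).coe.Adj ⟨x, hxv⟩ ⟨c, hcv⟩ := by
      exact Or.inr (Or.inl ⟨rfl, hx⟩)
    have key : ∀ a : (spiderSub G c s x p h hx hxp).verts,
        (spiderSub G c s x p h hx hxp).coe.Reachable a ⟨c, hcv⟩ := by
      rintro ⟨a, ha⟩
      rcases (ha : a ∈ insert p (insert c s)) with rfl | rfl | ha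
      · refine (Adj.reachable ?_).trans hadjxc.reachable
        exact Or.inr (Or.inr (Or.inr ⟨rfl, rfl⟩))
      · exact Reachable.refl _
      · exact Adj.reachable (by exact Or.inr (Or.inl ⟨rfl, ha⟩))
    intro a b
    exact (key a).trans (key b).symm
  · apply acyclic_of_edges (spiderSub G c s x p h hx hxp).coe ⟨c, hcv⟩ ⟨x, hxv⟩ ⟨p, hpv⟩
    · rintro ⟨a, ha⟩ ⟨b, hb⟩ hab
      rcases (hab : _ ∨ _ ∨ _ ∨ _) with ⟨h1, -⟩ | ⟨h1, -⟩ | ⟨h1, h2⟩ | ⟨h1, h2⟩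
      · exact Or.inl (Subtype.ext h1)
      · exact Or.inr (Or.inl (Subtype.ext h1))
      · exact Or.inr (Or.inr (Or.inl ⟨Subtype.ext h1, Subtype.ext h2⟩))
      · exact Or.inr (Or.inr (Or.inr ⟨Subtype.ext h1, Subtype.ext h2⟩))
    · rintro (⟨-, hps'⟩ | ⟨hpc', -⟩ | ⟨hcx, -⟩ | ⟨hcp, -⟩)
      · exact hps hps'
      · exact hpc hpc'
      · exact hxc hcx.symm
      · exact hpc hcp.symm

end Aux

-- chunk C: specialized lemmas (compiled together with defs)
section Steiner

open Sum

variable {m : ℕ}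

/-- abbreviation for our graph -/
private abbrev BG (m : ℕ) : SimpleGraph (Fin (m+2) ⊕ Fin (m+3)) :=
  completeBipartiteGraph (Fin (m+2)) (Fin (m+3))

lemma bg_adj (a : Fin (m+2)) (b : Fin (m+3)) : (BG m).Adj (inl a) (inr b) := by
  simp [completeBipartiteGraph]

/-- in a connected subgraph with two distinct vertices, every vertex has a neighbor -/
lemma exists_subgraph_adj {V' : Type*} {G : SimpleGraph V'} (T : G.Subgraph)
    (hconn : T.coe.Connected) {u v : V'} (hu : u ∈ T.verts) (hv : v ∈ T.verts)
    (huv : u ≠ v) : ∃ w, T.Adj u w := by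
  obtain ⟨q⟩ := hconn ⟨u, hu⟩ ⟨v, hv⟩
  have hne : ¬ q.Nil := Walk.not_nil_of_ne (fun h => huv (congrArg Subtype.val h))
  exact ⟨(q.getVert 1 : T.verts), (Subgraph.coe_adj _ _ _).mp (q.adj_snd hne)⟩

/-- the set in the definition of steinerLambda -/
private def AS (m : ℕ) (S : Set (Fin (m+2) ⊕ Fin (m+3))) : Set ℕ :=
  {n | ∃ T : Fin n → (BG m).Subgraph, (∀ i, (BG m).IsSteinerTree S (T i)) ∧
    ∀ i j, i ≠ j → Disjoint (T i).edgeSet (T j).edgeSet}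

lemma steinerLambda_eq_sSup (S : Set (Fin (m+2) ⊕ Fin (m+3))) :
    (BG m).steinerLambda S = sSup (AS m S) := rfl

lemma zero_mem_AS (S : Set (Fin (m+2) ⊕ Fin (m+3))) : 0 ∈ AS m S :=
  ⟨fun i => i.elim0, fun i => i.elim0, fun i => i.elim0⟩

lemma AS_bddAbove (S : Set (Fin (m+2) ⊕ Fin (m+3)))
    (h2 : ∃ u ∈ S, ∃ v ∈ S, u ≠ v) : BddAbove (AS m S) := by
  classical
  obtain ⟨u, hu, v, hv, huv⟩ := h2
  refine ⟨Fintype.card (Sym2 (Fin (m+2) ⊕ Fin (m+3))), ?_⟩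
  rintro n ⟨T, hT, hdisj⟩
  have key : ∀ i : Fin n, ∃ e : Sym2 (Fin (m+2) ⊕ Fin (m+3)), e ∈ (T i).edgeSet := by
    intro i
    obtain ⟨w, hw⟩ := exists_subgraph_adj (T i) (hT i).2.isConnected
      ((hT i).1 hu) ((hT i).1 hv) huv
    exact ⟨s(u, w), hw⟩
  choose f hf using key
  have hinj : Function.Injective f := by
    intro i j hij
    by_contra hne
    exact Set.disjoint_left.mp (hdisj i j hne) (hf i) (hij ▸ hf j)
  simpa using Fintype.card_le_of_injective f hinj

/-- degree bound at a right vertex -/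
lemma AS_le_right (S : Set (Fin (m+2) ⊕ Fin (m+3))) (r : Fin (m+3))
    (hr : inr r ∈ S) (u : Fin (m+2) ⊕ Fin (m+3)) (hu : u ∈ S) (hne : u ≠ inr r) :
    ∀ n ∈ AS m S, n ≤ m + 2 := by
  classical
  rintro n ⟨T, hT, hdisj⟩
  have key : ∀ i : Fin n, ∃ a : Fin (m+2), (T i).Adj (inr r) (inl a) := by
    intro i
    obtain ⟨w, hw⟩ := exists_subgraph_adj (T i) (hT i).2.isConnected
      ((hT i).1 hr) ((hT i).1 hu) (Ne.symm hne)
    have hGadj := (T i).adj_sub hw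
    cases w with
    | inl a => exact ⟨a, hw⟩
    | inr b => simp [completeBipartiteGraph] at hGadj
  choose f hf using key
  have hinj : Function.Injective f := by
    intro i j hij
    by_contra hne2
    have h1 : s(inr (β := Fin (m+3)) r, inl (f i)) ∈ (T i).edgeSet := hf i
    have h2 : s(inr (β := Fin (m+3)) r, inl (f i)) ∈ (T j).edgeSet := by
      rw [hij]; exact hf j
    exact Set.disjoint_left.mp (hdisj i j hne2) h1 h2
  simpa using Fintype.card_le_of_injective f hinj

end Steiner

section Constructions
open Sum
variable {m : ℕ}

lemma memA_rrr (r1 r2 r3 : Fin (m+3)) : (m+2) ∈ AS m {inr r1, inr r2, inr r3} := by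
  have hadj : ∀ i : Fin (m+2), ∀ v ∈ ({inr r1, inr r2, inr r3} :
      Set (Fin (m+2) ⊕ Fin (m+3))), (BG m).Adj (inl i) v := by
    intro i v hv
    simp only [Set.mem_insert_iff, Set.mem_singleton_iff] at hv
    rcases hv with rfl | rfl | rfl <;> exact bg_adj _ _
  refine ⟨fun i => starSub (BG m) (inl i) _ (hadj i),
    fun i => ⟨Set.subset_insert _ _, starSub_isTree _ _ _ _⟩, ?_⟩
  intro i j hij
  rw [Set.disjoint_left]
  intro e he1 he2
  rw [starSub_edgeSet] at he1 he2
  obtain ⟨v, hv, rfl⟩ := he1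
  obtain ⟨w, hw, hee⟩ := he2
  simp only [Set.mem_insert_iff, Set.mem_singleton_iff] at hv hw
  rcases Sym2.eq_iff.mp hee with ⟨h1, -⟩ | ⟨h1, -⟩
  · exact hij (Sum.inl_injective h1)
  · rcases hw with rfl | rfl | rfl <;> simp at h1

lemma memA_lll (l1 l2 l3 : Fin (m+2)) : (m+2) ∈ AS m {inl l1, inl l2, inl l3} := by
  have hadj : ∀ i : Fin (m+2), ∀ v ∈ ({inl l1, inl l2, inl l3} :
      Set (Fin (m+2) ⊕ Fin (m+3))), (BG m).Adj (inr i.castSucc) v := by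
    intro i v hv
    simp only [Set.mem_insert_iff, Set.mem_singleton_iff] at hv
    rcases hv with rfl | rfl | rfl <;> exact (bg_adj _ _).symm
  refine ⟨fun i => starSub (BG m) (inr i.castSucc) _ (hadj i),
    fun i => ⟨Set.subset_insert _ _, starSub_isTree _ _ _ _⟩, ?_⟩
  intro i j hij
  rw [Set.disjoint_left]
  intro e he1 he2
  rw [starSub_edgeSet] at he1 he2
  obtain ⟨v, hv, rfl⟩ := he1
  obtain ⟨w, hw, hee⟩ := he2
  simp only [Set.mem_insert_iff, Set.mem_singleton_iff] at hv hw
  rcases Sym2.eq_iff.mp hee with ⟨h1, -⟩ | ⟨h1, -⟩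
  · exact hij (Fin.castSucc_injective _ (Sum.inr_injective h1))
  · rcases hw with rfl | rfl | rfl <;> simp at h1

lemma memA_llr (l1 l2 : Fin (m+2)) (r1 : Fin (m+3)) :
    (m+2) ∈ AS m {inl l1, inl l2, inr r1} := by
  have hadj : ∀ x : Fin (m+2), ∀ v ∈ ({inl l1, inl l2, inl x} :
      Set (Fin (m+2) ⊕ Fin (m+3))), (BG m).Adj (inr (r1.succAbove x)) v := by
    intro x v hv
    simp only [Set.mem_insert_iff, Set.mem_singleton_iff] at hv
    rcases hv with rfl | rfl | rfl <;> exact (bg_adj _ _).symm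
  refine ⟨fun x => spiderSub (BG m) (inr (r1.succAbove x)) {inl l1, inl l2, inl x}
      (inl x) (inr r1) (hadj x) (by simp) (bg_adj x r1), fun x => ⟨?_, ?_⟩, ?_⟩
  · intro v hv
    simp only [Set.mem_insert_iff, Set.mem_singleton_iff] at hv
    rcases hv with rfl | rfl | rfl
    · exact Set.mem_insert_of_mem _ (Set.mem_insert_of_mem _ (by simp))
    · exact Set.mem_insert_of_mem _ (Set.mem_insert_of_mem _ (by simp))
    · exact Set.mem_insert _ _
  · exact spiderSub_isTree _ _ _ _ _ _ _ _
      (by simp [Fin.ne_succAbove r1 x]) (by simp)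
  · intro x y hxy
    rw [Set.disjoint_left]
    intro e he1 he2
    rw [spiderSub_edgeSet] at he1 he2
    rcases he1 with ⟨v, hv, rfl⟩ | rfl
    · rcases he2 with ⟨w, hw, hee⟩ | hee
      · simp only [Set.mem_insert_iff, Set.mem_singleton_iff] at hv hw
        rcases Sym2.eq_iff.mp hee with ⟨h1, -⟩ | ⟨h1, -⟩
        · exact hxy (Fin.succAbove_right_injective (Sum.inr_injective h1))
        · rcases hw with rfl | rfl | rfl <;> simp at h1
      · rcases Sym2.eq_iff.mp hee with ⟨h1, -⟩ | ⟨-, h2⟩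
        · simp at h1
        · simp only [Set.mem_insert_iff, Set.mem_singleton_iff] at hv
          have : r1.succAbove x = r1 := by
            rcases Sym2.eq_iff.mp hee with ⟨h1', -⟩ | ⟨h1', -⟩
            · simp at h1'
            · exact Sum.inr_injective h1'
          exact Fin.succAbove_ne r1 x this
    · rcases he2 with ⟨w, hw, hee⟩ | hee
      · simp only [Set.mem_insert_iff, Set.mem_singleton_iff] at hw
        rcases Sym2.eq_iff.mp hee with ⟨h1, h2⟩ | ⟨h1, h2⟩
        · simp at h1
        · exact Fin.succAbove_ne r1 y (Sum.inr_injective h2.symm)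
      · rcases Sym2.eq_iff.mp hee with ⟨h1, -⟩ | ⟨h1, -⟩
        · exact hxy (Sum.inl_injective h1)
        · simp at h1

lemma memA_lrr (l1 : Fin (m+2)) (r1 r2 : Fin (m+3)) (h12 : r1 ≠ r2) :
    (m+2) ∈ AS m {inl l1, inr r1, inr r2} := by
  classical
  obtain ⟨r', hr'⟩ := Fin.exists_succAbove_eq h12
  set σ : Fin (m+1) → Fin (m+3) := fun j => r2.succAbove (r'.succAbove j) with hσ
  have hσr2 : ∀ j, σ j ≠ r2 := fun j => Fin.succAbove_ne _ _
  have hσr1 : ∀ j, σ j ≠ r1 := by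
    intro j h
    exact Fin.succAbove_ne r' j (Fin.succAbove_right_injective (h.trans hr'.symm))
  have hσinj : Function.Injective σ :=
    Fin.succAbove_right_injective.comp Fin.succAbove_right_injective
  have hadj0 : ∀ v ∈ ({inr r1, inr r2} : Set (Fin (m+2) ⊕ Fin (m+3))),
      (BG m).Adj (inl l1) v := by
    intro v hv
    simp only [Set.mem_insert_iff, Set.mem_singleton_iff] at hv
    rcases hv with rfl | rfl <;> exact bg_adj _ _
  have hadjj : ∀ j : Fin (m+1), ∀ v ∈ ({inr r1, inr r2, inr (σ j)} :
      Set (Fin (m+2) ⊕ Fin (m+3))), (BG m).Adj (inl (l1.succAbove j)) v := by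
    intro j v hv
    simp only [Set.mem_insert_iff, Set.mem_singleton_iff] at hv
    rcases hv with rfl | rfl | rfl <;> exact bg_adj _ _
  refine ⟨fun i => if h : i = 0 then starSub (BG m) (inl l1) {inr r1, inr r2} hadj0
    else spiderSub (BG m) (inl (l1.succAbove (i.pred h))) {inr r1, inr r2, inr (σ (i.pred h))}
      (inr (σ (i.pred h))) (inl l1) (hadjj _) (by simp) ((bg_adj l1 _).symm),
    ?_, ?_⟩
  · intro i
    beta_reduce
    by_cases h : i = 0
    · rw [dif_pos h]
      constructor
      · intro v hv; exact hv
      · exact starSub_isTree _ _ _ _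
    · rw [dif_neg h]
      constructor
      · intro v hv
        simp only [Set.mem_insert_iff, Set.mem_singleton_iff] at hv
        rcases hv with rfl | rfl | rfl
        · exact Set.mem_insert _ _
        · exact Set.mem_insert_of_mem _ (Set.mem_insert_of_mem _ (by simp))
        · exact Set.mem_insert_of_mem _ (Set.mem_insert_of_mem _ (by simp))
      · exact spiderSub_isTree _ _ _ _ _ _ _ _
          (by simp [(Fin.ne_succAbove l1 (i.pred h))]) (by simp)
  · intro i j hij
    -- edge description
    have hedge : ∀ (i : Fin (m+2)) (e : Sym2 (Fin (m+2) ⊕ Fin (m+3))),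
        e ∈ (if h : i = 0 then starSub (BG m) (inl l1) {inr r1, inr r2} hadj0
          else spiderSub (BG m) (inl (l1.succAbove (i.pred h)))
            {inr r1, inr r2, inr (σ (i.pred h))} (inr (σ (i.pred h))) (inl l1)
            (hadjj _) (by simp) ((bg_adj l1 _).symm)).edgeSet ↔
        (if h : i = 0 then ∃ v ∈ ({inr r1, inr r2} : Set _), e = s(inl l1, v)
          else (∃ v ∈ ({inr r1, inr r2, inr (σ (i.pred h))} : Set _),
              e = s(inl (l1.succAbove (i.pred h)), v)) ∨
            e = s(inr (σ (i.pred h)), inl l1)) := by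
      intro i e
      by_cases h : i = 0
      · rw [dif_pos h, dif_pos h, starSub_edgeSet]
      · rw [dif_neg h, dif_neg h, spiderSub_edgeSet]
    rw [Set.disjoint_left]
    intro e he1 he2
    rw [hedge i] at he1
    rw [hedge j] at he2
    by_cases hi : i = 0 <;> by_cases hj : j = 0
    · exact hij (hi.trans hj.symm)
    · rw [dif_pos hi] at he1
      rw [dif_neg hj] at he2
      obtain ⟨v, hv, rfl⟩ := he1
      simp only [Set.mem_insert_iff, Set.mem_singleton_iff] at hv
      rcases he2 with ⟨w, hw, hee⟩ | hee
      · rcases Sym2.eq_iff.mp hee with ⟨h1, -⟩ | ⟨h1, -⟩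
        · exact Fin.ne_succAbove l1 (j.pred hj) (Sum.inl_injective h1)
        · simp only [Set.mem_insert_iff, Set.mem_singleton_iff] at hw
          rcases hw with rfl | rfl | rfl <;> simp at h1
      · rcases Sym2.eq_iff.mp hee with ⟨h1, -⟩ | ⟨-, h2⟩
        · simp at h1
        · rcases hv with rfl | rfl
          · exact hσr1 _ (Sum.inr_injective h2.symm)
          · exact hσr2 _ (Sum.inr_injective h2.symm)
    · rw [dif_neg hi] at he1
      rw [dif_pos hj] at he2
      obtain ⟨v, hv, rfl⟩ := he2
      simp only [Set.mem_insert_iff, Set.mem_singleton_iff] at hv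
      rcases he1 with ⟨w, hw, hee⟩ | hee
      · rcases Sym2.eq_iff.mp hee with ⟨h1, -⟩ | ⟨h1, -⟩
        · exact Fin.ne_succAbove l1 (i.pred hi) (Sum.inl_injective h1)
        · simp only [Set.mem_insert_iff, Set.mem_singleton_iff] at hw
          rcases hw with rfl | rfl | rfl <;> simp at h1
      · rcases Sym2.eq_iff.mp hee with ⟨h1, -⟩ | ⟨-, h2⟩
        · simp at h1
        · rcases hv with rfl | rfl
          · exact hσr1 _ (Sum.inr_injective h2).symm
          · exact hσr2 _ (Sum.inr_injective h2).symm
    · rw [dif_neg hi] at he1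
      rw [dif_neg hj] at he2
      have hpred : i.pred hi ≠ j.pred hj := by
        intro h; exact hij (by rw [← Fin.succ_pred i hi, ← Fin.succ_pred j hj, h])
      rcases he1 with ⟨v, hv, rfl⟩ | rfl
      · rcases he2 with ⟨w, hw, hee⟩ | hee
        · rcases Sym2.eq_iff.mp hee with ⟨h1, -⟩ | ⟨h1, -⟩
          · exact hpred (Fin.succAbove_right_injective (Sum.inl_injective h1))
          · simp only [Set.mem_insert_iff, Set.mem_singleton_iff] at hw
            rcases hw with rfl | rfl | rfl <;> simp at h1
        · rcases Sym2.eq_iff.mp hee with ⟨h1, -⟩ | ⟨h1, -⟩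
          · simp at h1
          · exact Fin.ne_succAbove l1 (i.pred hi) (Sum.inl_injective h1).symm
      · rcases he2 with ⟨w, hw, hee⟩ | hee
        · rcases Sym2.eq_iff.mp hee with ⟨h1, -⟩ | ⟨-, h2⟩
          · simp at h1
          · exact Fin.ne_succAbove l1 (j.pred hj) (Sum.inl_injective h2)
        · rcases Sym2.eq_iff.mp hee with ⟨h1, -⟩ | ⟨h1, -⟩
          · exact hpred (hσinj (Sum.inr_injective h1))
          · simp at h1

lemma lower_all (S : Set (Fin (m+2) ⊕ Fin (m+3))) (hS : S.ncard = 3) :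
    m + 2 ≤ (BG m).steinerLambda S := by
  obtain ⟨a, b, c, hab, hac, hbc, rfl⟩ := Set.ncard_eq_three.mp hS
  have hbdd : BddAbove (AS m {a, b, c}) :=
    AS_bddAbove _ ⟨a, by simp, b, by simp, hab⟩
  rw [steinerLambda_eq_sSup]
  refine le_csSup hbdd ?_
  rcases a with x | x <;> rcases b with y | y <;> rcases c with z | z
  · exact memA_lll x y z
  · exact memA_llr x y z
  · rw [Set.pair_comm (inr y) (inl z)]
    exact memA_llr x z y
  · exact memA_lrr x y z (by simpa using hbc)
  · rw [Set.insert_comm (inr x) (inl y), Set.pair_comm (inr x) (inl z)]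
    exact memA_llr y z x
  · rw [Set.insert_comm (inr x) (inl y)]
    exact memA_lrr y x z (by simpa using hac)
  · rw [Set.pair_comm (inr y) (inl z), Set.insert_comm (inr x) (inl z)]
    exact memA_lrr z x y (by simpa using hab)
  · exact memA_rrr x y z

end Constructions

theorem lambda_three_completeBipartite (ℓ : ℕ) (hl : 2 ≤ ℓ) :
    (completeBipartiteGraph (Fin ℓ) (Fin (ℓ + 1))).genEdgeConn 3 = ℓ := by
  obtain ⟨m, rfl⟩ : ∃ m, ℓ = m + 2 := ⟨ℓ - 2, by omega⟩
  show (BG m).genEdgeConn 3 = m + 2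
  have h01 : (⟨0, by omega⟩ : Fin (m+3)) ≠ ⟨1, by omega⟩ := by simp [Fin.ext_iff]
  have h02 : (⟨0, by omega⟩ : Fin (m+3)) ≠ ⟨2, by omega⟩ := by simp [Fin.ext_iff]
  have h12 : (⟨1, by omega⟩ : Fin (m+3)) ≠ ⟨2, by omega⟩ := by simp [Fin.ext_iff]
  set S0 : Set (Fin (m+2) ⊕ Fin (m+3)) :=
    {Sum.inr ⟨0, by omega⟩, Sum.inr ⟨1, by omega⟩, Sum.inr ⟨2, by omega⟩} with hS0
  have hS0card : S0.ncard = 3 := by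
    rw [hS0]
    exact Set.ncard_eq_three.mpr ⟨_, _, _, by simpa using h01, by simpa using h02,
      by simpa using h12, rfl⟩
  have hlam : (BG m).steinerLambda S0 = m + 2 := by
    apply le_antisymm
    · rw [steinerLambda_eq_sSup]
      refine csSup_le ⟨0, zero_mem_AS _⟩ ?_
      intro n hn
      exact AS_le_right S0 ⟨0, by omega⟩ (by rw [hS0]; simp)
        (Sum.inr ⟨1, by omega⟩) (by rw [hS0]; simp) (by simpa using h01.symm) n hn
    · exact lower_all S0 hS0card
  unfold SimpleGraph.genEdgeConn
  apply le_antisymm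
  · exact Nat.sInf_le ⟨S0, hS0card, hlam⟩
  · refine le_csInf ⟨m + 2, S0, hS0card, hlam⟩ ?_
    rintro n ⟨S, h3, rfl⟩
    exact lower_all S h3
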